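/- Existence of greatest common co-divisors up to w: let k ≥ 1, u : Fin k → S and w ∈ S with w ∈ S·(u i) for every i. Then there exists z ∈ S such that: (a) w ∈ S·z; (b) u i ∈ S·z for every i; and (c) whenever v ∈ S satisfies u i ∈ S·v for every i, one has z ∈ S·v. -/
import Mathlib


open scoped BigOperators

/-- `u` divides `w` in `S`: `w ∈ u·S`. -/
def SDvd {G : Type*} [Group G] (S : Submonoid G) (u w : G) : Prop := ∃ s ∈ S, w = u * s

/-- The left set `u·S = {u * s : s ∈ S}`. -/
def leftSet {G : Type*} [Group G] (S : Submonoid G) (u : G) : Set G := {w | ∃ s ∈ S, w = u * s}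

/-- `τ(u)`: the number of ordered factorizations `u = v * w` with `v, w ∈ S`. -/
noncomputable def tau {G : Type*} [Group G] (S : Submonoid G) (u : G) : ℕ :=
  Set.ncard {p : G × G | p.1 ∈ S ∧ p.2 ∈ S ∧ p.1 * p.2 = u}

/-- An integral monoid: a submonoid of a group satisfying Axioms I, II, III. -/
structure IntegralMonoid {G : Type*} [Group G] (S : Submonoid G) : Prop where
  ax1 : ∀ u ∈ S, u⁻¹ ∈ S → u = 1
  ax2 : ∀ u : G, ∃ x ∈ S, ∃ y ∈ S, u = x * y⁻¹ ∧
        ∀ z ∈ S, ∀ w ∈ S, u = z * w⁻¹ → ∃ c ∈ S, z = x * c ∧ w = y * c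
  ax3 : ∀ u ∈ S, {p : G × G | p.1 ∈ S ∧ p.2 ∈ S ∧ p.1 * p.2 = u}.Finite

/-- Binary least common left multiple from Axiom II. -/
lemma llm2 {G : Type*} [Group G] (S : Submonoid G) (hS : IntegralMonoid S)
    (a b : G) (ha : a ∈ S) (hb : b ∈ S) :
    ∃ g ∈ S, (∃ p ∈ S, g = a * p) ∧ (∃ q ∈ S, g = b * q) ∧
      ∀ h : G, (∃ p ∈ S, h = a * p) → (∃ q ∈ S, h = b * q) → ∃ c ∈ S, h = g * c := by
  obtain ⟨x, hx, y, hy, hxy, huniv⟩ := hS.ax2 (a⁻¹ * b)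
  have hax : a * x = b * y := by
    have : b = a * (x * y⁻¹) := by rw [← hxy]; group
    rw [this]; group
  refine ⟨a * x, S.mul_mem ha hx, ⟨x, hx, rfl⟩, ⟨y, hy, hax⟩, ?_⟩
  rintro h ⟨p, hp, hhp⟩ ⟨q, hq, hhq⟩
  have key : a⁻¹ * b = p * q⁻¹ := by
    have : a * p = b * q := by rw [← hhp, ← hhq]
    rw [inv_mul_eq_iff_eq_mul, ← mul_assoc, this]; group
  obtain ⟨c, hc, hpc, _⟩ := huniv p hp q hq key
  exact ⟨c, hc, by rw [hhp, hpc, mul_assoc]⟩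

/-- Least common left multiple of a finite family. -/
lemma llm_fam {G : Type*} [Group G] (S : Submonoid G) (hS : IntegralMonoid S) :
    ∀ (k : ℕ) (r : Fin k → G), (∀ i, r i ∈ S) →
    ∃ g ∈ S, (∀ i, ∃ p ∈ S, g = r i * p) ∧
      ∀ h ∈ S, (∀ i, ∃ p ∈ S, h = r i * p) → ∃ c ∈ S, h = g * c := by
  intro k
  induction k with
  | zero =>
    intro r _
    exact ⟨1, S.one_mem, fun i => i.elim0, fun h hh _ => ⟨h, hh, (one_mul h).symm⟩⟩
  | succ n ih =>
    intro r hr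
    obtain ⟨g, hg, hgmul, hgleast⟩ := ih (fun i => r i.castSucc) (fun i => hr _)
    obtain ⟨g', hg', ⟨p, hp, hgp⟩, ⟨q, hq, hgq⟩, hleast⟩ :=
      llm2 S hS g (r (Fin.last n)) hg (hr _)
    refine ⟨g', hg', ?_, ?_⟩
    · intro i
      induction i using Fin.lastCases with
      | last => exact ⟨q, hq, hgq⟩
      | cast j =>
        obtain ⟨p', hp', hgp'⟩ := hgmul j
        exact ⟨p' * p, S.mul_mem hp' hp, by rw [hgp, hgp', mul_assoc]⟩
    · intro h hh hcomm
      exact hleast h (hgleast h hh (fun i => hcomm i.castSucc)) (hcomm (Fin.last n))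

theorem gcd_codvd_exists {G : Type*} [Group G] (S : Submonoid G) (hS : IntegralMonoid S)
    (k : ℕ) (hk : 1 ≤ k) (u : Fin k → G) (hu : ∀ i, u i ∈ S)
    (w : G) (hw : w ∈ S) (hwu : ∀ i, ∃ s ∈ S, w = s * u i) :
    ∃ z ∈ S, (∃ s ∈ S, w = s * z) ∧ (∀ i, ∃ s ∈ S, u i = s * z) ∧
      ∀ v ∈ S, (∀ i, ∃ s ∈ S, u i = s * v) → ∃ s ∈ S, z = s * v := by
  classical
  choose r hrS hrw using hwu
  -- g : least common left multiple of the r i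
  obtain ⟨g, hg, hgmul, hgleast⟩ := llm_fam S hS k r hrS
  -- w is a common left multiple of the r i
  have hwcm : ∀ i, ∃ p ∈ S, w = r i * p := fun i => ⟨u i, hu i, hrw i⟩
  obtain ⟨z, hz, hwz⟩ := hgleast w hw hwcm
  refine ⟨z, hz, ⟨g, hg, hwz⟩, ?_, ?_⟩
  · intro i
    obtain ⟨p, hp, hgp⟩ := hgmul i
    refine ⟨p, hp, ?_⟩
    have : r i * u i = r i * (p * z) := by
      rw [← mul_assoc, ← hgp, ← hwz, hrw i]
    exact mul_left_cancel this
  · intro v hv hcomm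
    choose s hsS hsv using hcomm
    set i0 : Fin k := ⟨0, hk⟩
    have haeq : ∀ i, r i * s i = r i0 * s i0 := by
      intro i
      have h1 : r i * s i * v = w := by rw [mul_assoc, ← hsv i, hrw i]
      have h2 : r i0 * s i0 * v = w := by rw [mul_assoc, ← hsv i0, hrw i0]
      exact mul_right_cancel (h1.trans h2.symm)
    have haS : r i0 * s i0 ∈ S := S.mul_mem (hrS i0) (hsS i0)
    have hacm : ∀ i, ∃ p ∈ S, r i0 * s i0 = r i * p := fun i => ⟨s i, hsS i, (haeq i).symm⟩
    obtain ⟨d, hd, had⟩ := hgleast (r i0 * s i0) haS hacm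
    refine ⟨d, hd, ?_⟩
    have : g * z = g * (d * v) := by
      rw [← hwz, ← mul_assoc, ← had, mul_assoc, ← hsv i0, hrw i0]
    exact mul_left_cancel this
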